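/- Let D, W, γ > 0 with γ > 1, and let α = W₀((γ−1)/e) + 1 where W₀ is the principal Lambert W branch. Define g(τ₀) = τ₀ + τ(τ₀) where τ(τ₀) is the unique solution of τ₀ = (τ/γ)(2^{D/(Wτ)} − 1). Then the function h(τ) = (τ/γ)(2^{D/(Wτ)} − 1) + τ of the transmission duration τ is minimized at τ* = D·ln 2/(W·α), and the corresponding minimizing harvesting time is τ₀* = (D·ln 2/(W·α·γ))·(2^{α/ln 2} − 1). -/

import Mathlib

/-- Single-source schedule minimization: with `α = W₀((γ−1)/e) + 1` (where `w ≥ 0`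
satisfies the Lambert-W equation `w·e^w = (γ−1)/e`), the total-time function
`h(τ) = (τ/γ)(2^{D/(Wτ)} − 1) + τ` on `(0,∞)` is minimized at
`τ* = D·ln 2/(W·α)`, and the corresponding harvesting time is
`τ₀* = (D·ln 2/(W·α·γ))·(2^{α/ln 2} − 1)`. -/
theorem stmt_8 (D W γ w α : ℝ) (hD : 0 < D) (hW : 0 < W) (hγ : 1 < γ)
    (hw : 0 ≤ w) (hwE : w * Real.exp w = (γ - 1) / Real.exp 1) (hα : α = w + 1) :
    IsMinOn (fun τ : ℝ => (τ / γ) * ((2 : ℝ) ^ (D / (W * τ)) - 1) + τ) (Set.Ioi 0)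
      (D * Real.log 2 / (W * α)) ∧
    (D * Real.log 2 / (W * α) / γ) *
        ((2 : ℝ) ^ (D / (W * (D * Real.log 2 / (W * α)))) - 1) =
      (D * Real.log 2 / (W * α * γ)) * ((2 : ℝ) ^ (α / Real.log 2) - 1) := by
  have hln2 : 0 < Real.log 2 := Real.log_pos (by norm_num)
  have hα1 : (1:ℝ) ≤ α := by rw [hα]; linarith
  have hα0 : 0 < α := by linarith
  have hγ0 : 0 < γ := by linarith
  set c := D * Real.log 2 / W with hc
  have hc0 : 0 < c := by positivity
  have hE : Real.exp 1 > 0 := Real.exp_pos 1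
  have hkey : γ - 1 = (α - 1) * Real.exp α := by
    have hea : Real.exp α = Real.exp w * Real.exp 1 := by rw [hα, Real.exp_add]
    rw [hea, hα]
    have : w * Real.exp w * Real.exp 1 = γ - 1 := by
      rw [hwE]; field_simp
    linarith [this]
  have hrpow : ∀ t : ℝ, 0 < t → (2:ℝ) ^ (D / (W * t)) = Real.exp (c / t) := by
    intro t ht
    rw [Real.rpow_def_of_pos (by norm_num : (0:ℝ) < 2)]
    congr 1
    rw [hc]
    field_simp
  have hτstar : D * Real.log 2 / (W * α) = c / α := by
    rw [hc]; field_simp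
  constructor
  · intro τ hτ
    simp only [Set.mem_Ioi] at hτ
    simp only [Set.mem_setOf_eq]
    have hτs : 0 < c / α := by positivity
    rw [hτstar, hrpow τ hτ, hrpow (c/α) hτs]
    have hca : c / (c / α) = α := by field_simp
    rw [hca]
    set x := c / τ with hx
    have hx0 : 0 < x := by positivity
    have hτx : τ * x = c := by rw [hx]; field_simp
    have hexp : (x - α + 1) * Real.exp α ≤ Real.exp x := by
      have h1 : (x - α) + 1 ≤ Real.exp (x - α) := Real.add_one_le_exp _
      have h2 : Real.exp (x - α) * Real.exp α = Real.exp x := by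
        rw [← Real.exp_add]; ring_nf
      nlinarith [Real.exp_pos α]
    have hL : (c / α / γ) * (Real.exp α - 1) + c / α = c * Real.exp α / γ := by
      field_simp
      linear_combination hkey
    rw [hL]
    have hR : (τ / γ) * (Real.exp x - 1) + τ = (Real.exp x - 1 + γ) * τ / γ := by
      field_simp
    rw [hR]
    have hmain : c * Real.exp α ≤ (Real.exp x - 1 + γ) * τ := by
      nlinarith [mul_le_mul_of_nonneg_right hexp hτ.le, Real.exp_pos α, hkey, hτx]
    gcongr
  · have h1 : D / (W * (D * Real.log 2 / (W * α))) = α / Real.log 2 := by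
      field_simp
    have h2 : D * Real.log 2 / (W * α) / γ = D * Real.log 2 / (W * α * γ) := by
      rw [div_div]
    rw [h1, h2]
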